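/- Let f : ℂ → ℂ, let x_0, x_1, … be pairwise distinct complex numbers, define the inverse differences by φ_0[x_k] = f(x_k) and φ_{i+1}[x_0,…,x_i,x_k] = (x_k − x_i)/(φ_i[x_0,…,x_{i-1},x_k] − φ_i[x_0,…,x_i]) for k > i, and assume all inverse differences φ_j[x_0,…,x_{j-1},x_k] for 0 ≤ j ≤ k ≤ n are well defined. With d_m = φ_m[x_0,…,x_m], define A_m, B_m by the Wallis recurrence A_{-2} = 0, B_{-2} = 1, A_{-1} = 1, B_{-1} = 0, A_m = d_m·A_{m-1} + (X − x_{m-1})·A_{m-2}, B_m = d_m·B_{m-1} + (X − x_{m-1})·B_{m-2}. If 0 ≤ i ≤ n and B_n(x_i) ≠ 0, then the nth convergent C_n = A_n/B_n satisfies C_n(x_i) = f(x_i). -/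
import Mathlib


open Polynomial

/-- Wallis numerator polynomials of the Thiele-type continued fraction
`d₀ + (x − x₀)/(d₁ + (x − x₁)/(d₂ + …))`, with index shifted by 2:
`wA d xs 0 = A₋₂ = 0`, `wA d xs 1 = A₋₁ = 1`, `wA d xs (m+2) = A_m`. -/
noncomputable def wA (d xs : ℕ → ℂ) : ℕ → ℂ[X]
  | 0 => 0
  | 1 => 1
  | 2 => C (d 0)
  | (m + 3) => C (d (m + 1)) * wA d xs (m + 2) + (X - C (xs m)) * wA d xs (m + 1)

/-- Wallis denominator polynomials, with index shifted by 2: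
`wB d xs 0 = B₋₂ = 1`, `wB d xs 1 = B₋₁ = 0`, `wB d xs (m+2) = B_m`. -/
noncomputable def wB (d xs : ℕ → ℂ) : ℕ → ℂ[X]
  | 0 => 1
  | 1 => 0
  | 2 => 1
  | (m + 3) => C (d (m + 1)) * wB d xs (m + 2) + (X - C (xs m)) * wB d xs (m + 1)

/-- Inverse differences of `f` at the points `xs`: `phi f xs i k` denotes
`φ_i[x_0, …, x_{i-1}, x_k]`, defined by `φ_0[x_k] = f(x_k)` and
`φ_{i+1}[x_0,…,x_i,x_k] = (x_k − x_i)/(φ_i[x_0,…,x_{i-1},x_k] − φ_i[x_0,…,x_i])`. -/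
noncomputable def phi (f : ℂ → ℂ) (xs : ℕ → ℂ) : ℕ → ℕ → ℂ
  | 0, k => f (xs k)
  | (i + 1), k => (xs k - xs i) / (phi f xs i k - phi f xs i i)

/-- `u f xs m = A_m(x_i) − f(x_i)·B_m(x_i)` (shifted index), for node `i`. -/
noncomputable def uu (f : ℂ → ℂ) (xs : ℕ → ℂ) (i m : ℕ) : ℂ :=
  (wA (fun m => phi f xs m m) xs m).eval (xs i)
    - f (xs i) * (wB (fun m => phi f xs m m) xs m).eval (xs i)

lemma uu_rec (f : ℂ → ℂ) (xs : ℕ → ℂ) (i m : ℕ) :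
    uu f xs i (m + 3) =
      phi f xs (m + 1) (m + 1) * uu f xs i (m + 2) + (xs i - xs m) * uu f xs i (m + 1) := by
  simp only [uu, wA, wB, eval_add, eval_mul, eval_C, eval_sub, eval_X]
  ring

lemma uu_key (f : ℂ → ℂ) (xs : ℕ → ℂ) (n : ℕ)
    (hwd : ∀ i k, i < k → k ≤ n → phi f xs i k ≠ phi f xs i i)
    (i : ℕ) (hi : i ≤ n) :
    ∀ j, j ≤ i →
      uu f xs i (j + 2) = (phi f xs j j - phi f xs j i) * uu f xs i (j + 1) := by
  intro j
  induction j with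
  | zero =>
    intro _
    simp [uu, wA, wB, phi]
  | succ j ih =>
    intro hj
    have hji : j < i := Nat.lt_of_succ_le hj
    have ihj := ih (Nat.le_of_lt hji)
    have hne : phi f xs j i - phi f xs j j ≠ 0 :=
      sub_ne_zero.mpr (hwd j i hji (le_trans hi le_rfl) )
    have ht : phi f xs (j + 1) i * (phi f xs j i - phi f xs j j) = xs i - xs j := by
      rw [phi]
      field_simp
    rw [uu_rec, ihj, ← ht]
    ring

lemma uu_zero (f : ℂ → ℂ) (xs : ℕ → ℂ) (n : ℕ)
    (hwd : ∀ i k, i < k → k ≤ n → phi f xs i k ≠ phi f xs i i)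
    (i : ℕ) (hi : i ≤ n) :
    ∀ m, uu f xs i (i + 2 + m) = 0 := by
  have h0 : uu f xs i (i + 2) = 0 := by
    rw [uu_key f xs n hwd i hi i le_rfl]
    simp
  have h1 : uu f xs i (i + 3) = 0 := by
    rw [uu_rec, h0]
    simp
  intro m
  induction m using Nat.twoStepInduction with
  | zero => exact h0
  | one => simpa [show i + 2 + 1 = i + 3 by ring] using h1
  | more m ih ih1 =>
    have : i + 2 + (m + 2) = (i + m + 1) + 3 := by ring
    rw [this, uu_rec]
    have e2 : i + m + 1 + 2 = i + 2 + (m + 1) := by ring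
    have e1 : i + m + 1 + 1 = i + 2 + m := by ring
    rw [e2, e1, ih1, ih]
    ring

theorem thiele_interpolation (f : ℂ → ℂ) (xs : ℕ → ℂ)
    (hdist : Function.Injective xs) (n : ℕ)
    (hwd : ∀ i k, i < k → k ≤ n → phi f xs i k ≠ phi f xs i i)
    (i : ℕ) (hi : i ≤ n)
    (hB : (wB (fun m => phi f xs m m) xs (n + 2)).eval (xs i) ≠ 0) :
    (wA (fun m => phi f xs m m) xs (n + 2)).eval (xs i) /
        (wB (fun m => phi f xs m m) xs (n + 2)).eval (xs i) = f (xs i) := by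
  have h := uu_zero f xs n hwd i hi (n - i)
  rw [show i + 2 + (n - i) = n + 2 by omega] at h
  have : (wA (fun m => phi f xs m m) xs (n + 2)).eval (xs i)
      = f (xs i) * (wB (fun m => phi f xs m m) xs (n + 2)).eval (xs i) := by
    have := sub_eq_zero.mp h
    simpa [uu] using this
  rw [this, mul_div_assoc, div_self hB, mul_one]
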